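/- Let G = (V,E) be a graph, c ∈ ℝ^E_+ a nonnegative cost function, and k > 0 such that every proper cut of G has cost at least k (i.e., c(δ(S)) ≥ k for all ∅ ≠ S ⊊ V). Suppose S ⊊ T are subsets of V with ∅ ≠ S, T ⊊ V, c(δ(S)) = c(δ(T)) = k, and some edge e belongs to both δ(S) and δ(T). If T ∖ S is a proper nonempty subset of V, then c(e) ≤ k/2. -/

import Mathlib

open Classical

noncomputable section

/-- The cut `δ(S)`: edges of `G` with exactly one endpoint in `S`. -/
def cutE {V : Type*} (G : SimpleGraph V) (S : Set V) : Set (Sym2 V) :=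
  {e | e ∈ G.edgeSet ∧ ∃ u v, e = s(u, v) ∧ u ∈ S ∧ v ∉ S}

/-- Characteristic vector of an edge set. -/
def chi {V : Type*} (C : Set (Sym2 V)) : Sym2 V → ℝ := fun e => if e ∈ C then 1 else 0

/-- Total cost of an edge set. -/
def cost {V : Type*} [Fintype V] [DecidableEq V] (c : Sym2 V → ℝ) (C : Set (Sym2 V)) : ℝ :=
  ∑ e ∈ Finset.univ.filter (· ∈ C), c e

theorem stmt1 {V : Type*} [Fintype V] [DecidableEq V] (G : SimpleGraph V)
    (c : Sym2 V → ℝ) (hc : ∀ e, 0 ≤ c e) (k : ℝ) (hk : 0 < k)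
    (hmin : ∀ S : Set V, S.Nonempty → S ≠ Set.univ → k ≤ cost c (cutE G S))
    (S T : Set V) (hST : S ⊂ T) (hS : S.Nonempty) (hT : T ≠ Set.univ)
    (hcS : cost c (cutE G S) = k) (hcT : cost c (cutE G T) = k)
    (e : Sym2 V) (heS : e ∈ cutE G S) (heT : e ∈ cutE G T)
    (hTS : (T \ S).Nonempty) (hTSu : T \ S ≠ Set.univ) :
    c e ≤ k / 2 := by
  classical
  obtain ⟨heG, u, v, huv, huS, hvS⟩ := heS
  obtain ⟨heG', u', v', huv', huT, hvT⟩ := heT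
  have hSsubT := hST.subset
  have huT' : u ∈ T := hSsubT huS
  have hvT' : v ∉ T := by
    rw [huv] at huv'
    rcases Sym2.eq_iff.mp huv' with ⟨h1, h2⟩ | ⟨h1, h2⟩
    · subst h1; subst h2; exact hvT
    · exact absurd huT' (h1 ▸ hvT)
  set A := Finset.univ.filter (· ∈ cutE G S) with hA
  set B := Finset.univ.filter (· ∈ cutE G T) with hB
  set D := Finset.univ.filter (· ∈ cutE G (T \ S)) with hD
  have heA : e ∈ A := by
    simp only [hA, Finset.mem_filter, Finset.mem_univ, true_and]
    exact ⟨heG, u, v, huv, huS, hvS⟩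
  have heB : e ∈ B := by
    simp only [hB, Finset.mem_filter, Finset.mem_univ, true_and]
    exact ⟨heG, u, v, huv, huT', hvT'⟩
  have heD : e ∉ D := by
    simp only [hD, Finset.mem_filter, Finset.mem_univ, true_and]
    rintro ⟨-, a, b, hab, haTS, hbTS⟩
    rw [huv] at hab
    rcases Sym2.eq_iff.mp hab with ⟨h1, h2⟩ | ⟨h1, h2⟩
    · exact haTS.2 (h1 ▸ huS)
    · exact (h2 ▸ hvT') haTS.1
  have hDsub : D ⊆ (A ∪ B).erase e := by
    intro f hf
    have hf' := hf
    simp only [hD, Finset.mem_filter, Finset.mem_univ, true_and] at hf'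
    obtain ⟨hfG, a, b, hab, haTS, hbTS⟩ := hf'
    refine Finset.mem_erase.mpr ⟨fun h => heD (h ▸ hf), ?_⟩
    rw [Finset.mem_union]
    by_cases hbT : b ∈ T
    · -- b ∈ T; b ∉ T\S so b ∈ S, a ∉ S → f ∈ δ(S) with endpoints (b,a)
      have hbS : b ∈ S := by
        by_contra hbS
        exact hbTS ⟨hbT, hbS⟩
      left
      simp only [hA, Finset.mem_filter, Finset.mem_univ, true_and]
      exact ⟨hfG, b, a, hab.trans (Sym2.eq_swap), hbS, haTS.2⟩
    · right
      simp only [hB, Finset.mem_filter, Finset.mem_univ, true_and]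
      exact ⟨hfG, a, b, hab, haTS.1, hbT⟩
  have hkD : k ≤ ∑ x ∈ D, c x := hmin (T \ S) hTS hTSu
  have h1 : ∑ x ∈ D, c x ≤ ∑ x ∈ (A ∪ B).erase e, c x :=
    Finset.sum_le_sum_of_subset_of_nonneg hDsub (fun i _ _ => hc i)
  have h2 : ∑ x ∈ (A ∪ B).erase e, c x + c e = ∑ x ∈ A ∪ B, c x :=
    Finset.sum_erase_add _ _ (Finset.mem_union_left _ heA)
  have h3 : ∑ x ∈ A ∪ B, c x + ∑ x ∈ A ∩ B, c x = ∑ x ∈ A, c x + ∑ x ∈ B, c x :=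
    Finset.sum_union_inter
  have h4 : c e ≤ ∑ x ∈ A ∩ B, c x :=
    Finset.single_le_sum (fun i _ => hc i) (Finset.mem_inter.mpr ⟨heA, heB⟩)
  have hAk : ∑ x ∈ A, c x = k := hcS
  have hBk : ∑ x ∈ B, c x = k := hcT
  linarith

end
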